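/- Let w be a double occurrence word and u a nonempty single occurrence word none of whose symbols occur in w, and suppose w and uu are coprime. Then G_{wuu} contains two distinct (but possibly not disjoint) subgraphs each isomorphic to G_w: the induced subgraph on the classes of the vertices v of G_w, and the induced subgraph on the classes of the words vuu for v a vertex of G_w. Similarly G_{uuw} contains two subgraphs isomorphic to G_w, and moreover G_{wuu} ≅ G_{uuw}. -/

import Mathlib

/-- The Cartesian product of two digraphs (given by their adjacency relations). -/
def boxAdj {V₁ V₂ : Type*} (A₁ : V₁ → V₁ → Prop) (A₂ : V₂ → V₂ → Prop) :
    V₁ × V₂ → V₁ × V₂ → Prop :=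
  fun p q => (p.1 = q.1 ∧ A₂ p.2 q.2) ∨ (p.2 = q.2 ∧ A₁ p.1 q.1)

/-- A source of a digraph: a vertex with no incoming edge. -/
def IsSourceVertex {V : Type*} (A : V → V → Prop) (s : V) : Prop := ∀ v, ¬ A v s

/-- A target of a digraph: a vertex with no outgoing edge. -/
def IsTargetVertex {V : Type*} (A : V → V → Prop) (t : V) : Prop := ∀ v, ¬ A t v

/-- Weak connectivity: any two vertices are joined by a path in the symmetrized digraph. -/
def WeaklyConnected {V : Type*} (A : V → V → Prop) : Prop :=
  ∀ a b : V, Relation.ReflTransGen (fun x y => A x y ∨ A y x) a b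

/-- A digraph has no directed cycles. -/
def NoDirectedCycles {V : Type*} (A : V → V → Prop) : Prop :=
  ∀ v : V, ¬ Relation.TransGen A v v

/-- A digraph is weakly directed if it is weakly connected with a unique source
and a unique target. -/
def WeaklyDirected {V : Type*} (A : V → V → Prop) : Prop :=
  WeaklyConnected A ∧ (∃! s, IsSourceVertex A s) ∧ (∃! t, IsTargetVertex A t)

/-- A digraph is consistently directed if it is weakly directed and has no directed cycles. -/
def ConsistentlyDirected {V : Type*} (A : V → V → Prop) : Prop :=
  WeaklyDirected A ∧ NoDirectedCycles A

/-- Two digraphs are isomorphic: there is a bijection of vertex sets preserving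
adjacency in both directions. -/
def DigraphIso {V₁ V₂ : Type*} (A₁ : V₁ → V₁ → Prop) (A₂ : V₂ → V₂ → Prop) : Prop :=
  ∃ e : V₁ ≃ V₂, ∀ a b : V₁, A₂ (e a) (e b) ↔ A₁ a b

/-- The `n`-dimensional simplicial digraph `Δⁿ` on vertices `v₀, …, vₙ`,
with an edge from `v_i` to `v_j` iff `i < j`. -/
def simplexAdj (n : ℕ) : Fin (n + 1) → Fin (n + 1) → Prop := fun i j => i < j

/-- A double occurrence word: every symbol occurs zero or exactly two times. -/
def IsDOW (w : List ℕ) : Prop := ∀ x : ℕ, w.count x = 0 ∨ w.count x = 2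

/-- `u` is a repeat factor of `w`: `u` is a nonempty single occurrence word and
`w = x u y u z`. -/
def IsRepeatFactor (u w : List ℕ) : Prop :=
  u ≠ [] ∧ u.Nodup ∧ ∃ x y z : List ℕ, w = x ++ u ++ y ++ u ++ z

/-- `u` is a return factor of `w`: `u` is a nonempty single occurrence word and
`w = x u y u^R z`. -/
def IsReturnFactor (u w : List ℕ) : Prop :=
  u ≠ [] ∧ u.Nodup ∧ ∃ x y z : List ℕ, w = x ++ u ++ y ++ u.reverse ++ z

/-- `u` is a repeat or return factor of `w`. -/
def IsRRFactor (u w : List ℕ) : Prop := IsRepeatFactor u w ∨ IsReturnFactor u w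

/-- `u` is a maximal repeat or return factor of `w`: no repeat or return factor of `w`
containing `u` as a contiguous factor is strictly longer. `M^SOW_w = {u | IsMaximalRR u w}`. -/
def IsMaximalRR (u w : List ℕ) : Prop :=
  IsRRFactor u w ∧ ∀ v : List ℕ, IsRRFactor v w → u <:+: v → v.length ≤ u.length

/-- Ascending-order equivalence: `w ~ w'` iff `w' = map f w` for a bijection `f`
of the alphabet. -/
def AOEquiv (w w' : List ℕ) : Prop := ∃ f : ℕ ≃ ℕ, w' = w.map f

instance aoSetoid : Setoid (List ℕ) where
  r := AOEquiv
  iseqv := by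
    refine ⟨fun w => ⟨Equiv.refl ℕ, by simp⟩, ?_, ?_⟩
    · rintro w w' ⟨f, rfl⟩
      exact ⟨f.symm, by simp [List.map_map]⟩
    · rintro a b c ⟨f, rfl⟩ ⟨g, rfl⟩
      exact ⟨f.trans g, by simp [List.map_map]⟩

/-- Ascending-order equivalence classes of words. -/
abbrev WordClass : Type := Quotient aoSetoid

/-- `v` is an immediate successor of `w` (i.e. `v ∈ D(w)`): `v` is ascending-order
equivalent to `d_u(w)` for some maximal repeat or return factor `u` of `w`. -/
def ImmSucc (w v : List ℕ) : Prop :=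
  ∃ u x y z : List ℕ, IsMaximalRR u w ∧
    (w = x ++ u ++ y ++ u ++ z ∨ w = x ++ u ++ y ++ u.reverse ++ z) ∧
    AOEquiv (x ++ y ++ z) v

/-- `v` is a successor of `w` (allowing `v = w`). -/
def Successor (w v : List ℕ) : Prop := Relation.ReflTransGen ImmSucc w v

/-- The vertices of the word graph `G_w`: ascending-order equivalence classes of `w`
and all of its successors. -/
def WGVertex (w : List ℕ) : Type :=
  { c : WordClass // ∃ v : List ℕ, Successor w v ∧ Quotient.mk aoSetoid v = c }

/-- Adjacency between word classes: an edge from the class of `a` to the class of `b`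
iff `b ∈ D(a)`. -/
def ClassAdj (c c' : WordClass) : Prop :=
  ∃ a b : List ℕ, Quotient.mk aoSetoid a = c ∧ Quotient.mk aoSetoid b = c' ∧ ImmSucc a b

/-- The adjacency relation of the word graph `G_w`. -/
def WGAdj (w : List ℕ) (c c' : WGVertex w) : Prop := ClassAdj c.1 c'.1

/-- `w` is coprime to `w'`: all concatenations `uv` of a vertex of `G_w` with a vertex of
`G_{w'}` are pairwise inequivalent. -/
def CoprimeDOW (w w' : List ℕ) : Prop :=
  ∀ u u' v v' : List ℕ, Successor w u → Successor w u' → Successor w' v → Successor w' v' →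
    AOEquiv (u ++ v) (u' ++ v') → (AOEquiv u u' ∧ AOEquiv v v')


/-! ### Auxiliary lemmas -/

section Aux

open List

theorem aoe_refl (a : List ℕ) : AOEquiv a a := ⟨Equiv.refl ℕ, by simp⟩

theorem aoe_symm {a b : List ℕ} (h : AOEquiv a b) : AOEquiv b a := by
  obtain ⟨f, rfl⟩ := h; exact ⟨f.symm, by simp [List.map_map]⟩

theorem aoe_trans {a b c : List ℕ} (h : AOEquiv a b) (h' : AOEquiv b c) : AOEquiv a c := by
  obtain ⟨f, rfl⟩ := h; obtain ⟨g, rfl⟩ := h'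
  exact ⟨f.trans g, by simp [List.map_map]⟩

theorem aoe_length {a b : List ℕ} (h : AOEquiv a b) : a.length = b.length := by
  obtain ⟨f, rfl⟩ := h; simp

theorem aoe_nil {b : List ℕ} (h : AOEquiv [] b) : b = [] := by
  obtain ⟨f, rfl⟩ := h; rfl

theorem quot_eq_iff {a b : List ℕ} :
    (Quotient.mk aoSetoid a = Quotient.mk aoSetoid b) ↔ AOEquiv a b :=
  ⟨fun h => Quotient.exact h, fun h => Quotient.sound h⟩

theorem aoe_split {a b c d : List ℕ} (h : AOEquiv (a ++ b) (c ++ d))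
    (hl : a.length = c.length) : AOEquiv a c ∧ AOEquiv b d := by
  obtain ⟨f, hf⟩ := h
  rw [List.map_append] at hf
  obtain ⟨h1, h2⟩ := List.append_inj hf.symm (by simp [hl])
  exact ⟨⟨f, h1.symm⟩, ⟨f, h2.symm⟩⟩

/-- Transport of repeat/return factors along a bijection. -/
theorem isRRFactor_map (f : ℕ ≃ ℕ) {t s : List ℕ} (h : IsRRFactor t s) :
    IsRRFactor (t.map f) (s.map f) := by
  rcases h with ⟨ht, hnd, x, y, z, rfl⟩ | ⟨ht, hnd, x, y, z, rfl⟩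
  · exact Or.inl ⟨by simpa using ht, hnd.map f.injective,
      x.map f, y.map f, z.map f, by simp⟩
  · exact Or.inr ⟨by simpa using ht, hnd.map f.injective,
      x.map f, y.map f, z.map f, by simp [List.map_reverse]⟩

theorem isMaximalRR_map (f : ℕ ≃ ℕ) {t s : List ℕ} (h : IsMaximalRR t s) :
    IsMaximalRR (t.map f) (s.map f) := by
  refine ⟨isRRFactor_map f h.1, fun v hv hinf => ?_⟩
  have hv' : IsRRFactor (v.map f.symm) ((s.map f).map f.symm) := isRRFactor_map f.symm hv
  simp only [List.map_map, Equiv.symm_comp_self, List.map_id] at hv'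
  have hinf' : t <:+: v.map f.symm := by
    have := hinf.map f.symm
    simpa [List.map_map] using this
  have := h.2 _ hv' hinf'
  simpa using this

/-- `ImmSucc` is invariant under ascending-order equivalence of the source. -/
theorem immSucc_congr_left {a a' b : List ℕ} (h : AOEquiv a a') (hs : ImmSucc a b) :
    ImmSucc a' b := by
  obtain ⟨f, rfl⟩ := h
  obtain ⟨t, x, y, z, hmax, hdec, haoe⟩ := hs
  refine ⟨t.map f, x.map f, y.map f, z.map f, isMaximalRR_map f hmax, ?_, ?_⟩
  · rcases hdec with rfl | rfl
    · exact Or.inl (by simp)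
    · exact Or.inr (by simp [List.map_reverse])
  · refine aoe_trans ?_ haoe
    refine aoe_symm ?_
    exact ⟨f, by simp⟩

theorem immSucc_congr_right {a b b' : List ℕ} (hs : ImmSucc a b) (h : AOEquiv b b') :
    ImmSucc a b' := by
  obtain ⟨t, x, y, z, hmax, hdec, haoe⟩ := hs
  exact ⟨t, x, y, z, hmax, hdec, aoe_trans haoe h⟩

theorem classAdj_iff {a b : List ℕ} :
    ClassAdj (Quotient.mk aoSetoid a) (Quotient.mk aoSetoid b) ↔ ImmSucc a b := by
  constructor
  · rintro ⟨a₀, b₀, ha, hb, hs⟩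
    rw [quot_eq_iff] at ha hb
    exact immSucc_congr_right (immSucc_congr_left ha hs) hb
  · intro hs
    exact ⟨a, b, rfl, rfl, hs⟩

theorem succ_congr {a a' s : List ℕ} (h : AOEquiv a a') (hs : Successor a s) :
    ∃ s', Successor a' s' ∧ AOEquiv s s' := by
  induction hs with
  | refl => exact ⟨a', Relation.ReflTransGen.refl, h⟩
  | @tail b c _hab hbc ih =>
      obtain ⟨b', hb', hbb'⟩ := ih
      exact ⟨c, hb'.tail (immSucc_congr_left hbb' hbc), aoe_refl c⟩

end Aux
section Comb

open List

theorem mem_of_or_rev {t t' : List ℕ} (ht' : t' = t ∨ t' = t.reverse) :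
    ∀ a, a ∈ t' ↔ a ∈ t := by
  rcases ht' with rfl | rfl <;> intro a <;> simp

theorem length_or_rev {t t' : List ℕ} (ht' : t' = t ∨ t' = t.reverse) :
    t'.length = t.length := by
  rcases ht' with rfl | rfl <;> simp

/-- Key structural lemma inside `u ++ u`. -/
theorem factor_of_uu {u t t' x y z : List ℕ} (hund : u.Nodup)
    (heq : u ++ u = x ++ t ++ y ++ t' ++ z) (ht : t ≠ [])
    (ht' : t' = t ∨ t' = t.reverse) :
    t <:+: u ∧ (t.length = u.length → x = [] ∧ y = [] ∧ z = []) := by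
  have hmem' := mem_of_or_rev ht'
  have hlt' := length_or_rev ht'
  have hlen : 2 * u.length = x.length + t.length + y.length + t'.length + z.length := by
    have := congrArg List.length heq
    simp only [List.length_append] at this
    omega
  have haddendum : t.length = u.length → x = [] ∧ y = [] ∧ z = [] := by
    intro hl
    refine ⟨List.eq_nil_of_length_eq_zero (by omega), List.eq_nil_of_length_eq_zero (by omega),
      List.eq_nil_of_length_eq_zero (by omega)⟩
  refine ⟨?_, haddendum⟩
  by_cases h1 : x.length + t.length ≤ u.length
  · -- x ++ t is a prefix of u
    have H : u ++ u = (x ++ t) ++ (y ++ (t' ++ z)) := by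
      simpa [List.append_assoc] using heq
    have hpre : x ++ t <+: u := by
      refine List.prefix_of_prefix_length_le ⟨_, H.symm⟩ (u.prefix_append u) ?_
      simpa using h1
    obtain ⟨e, he⟩ := hpre
    exact ⟨x, e, by simp [← he, List.append_assoc]⟩
  · by_cases h2 : u.length ≤ x.length
    · -- u is a prefix of x
      have hpre : u <+: x := by
        refine List.prefix_of_prefix_length_le (u.prefix_append u) ?_ h2
        exact ⟨t ++ (y ++ (t' ++ z)), by simpa [List.append_assoc] using heq.symm⟩
      obtain ⟨x₁, rfl⟩ := hpre
      have H : u ++ u = u ++ (x₁ ++ (t ++ (y ++ (t' ++ z)))) := by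
        simpa [List.append_assoc] using heq
      have hu2 : u = x₁ ++ (t ++ (y ++ (t' ++ z))) := List.append_cancel_left H
      exact ⟨x₁, y ++ (t' ++ z), by simp [hu2, List.append_assoc]⟩
    · -- straddling case: contradiction
      exfalso
      push_neg at h1 h2
      have H : u ++ u = x ++ (t ++ (y ++ (t' ++ z))) := by
        simpa [List.append_assoc] using heq
      set m := u.length with hm
      have hdrop : (u ++ u).drop m = u := by
        simp [List.drop_append, hm]
      have hdrop2 : (x ++ (t ++ (y ++ (t' ++ z)))).drop m
          = t.drop (m - x.length) ++ (y ++ (t' ++ z)) := by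
        rw [List.drop_append, List.drop_eq_nil_of_le (le_of_lt h2),
          List.nil_append, List.drop_append,
          show m - x.length - t.length = 0 by omega, List.drop_zero]
      have hu2 : u = t.drop (m - x.length) ++ (y ++ (t' ++ z)) := by
        rw [← hdrop, H, hdrop2]
      have hne : t.drop (m - x.length) ≠ [] := by
        intro h
        have := congrArg List.length h
        simp at this
        omega
      obtain ⟨a, ha⟩ := List.exists_mem_of_ne_nil _ hne
      have hat : a ∈ t := (List.drop_suffix _ t).subset ha
      have hat' : a ∈ t' := (hmem' a).2 hat
      have hnd2 := hund
      rw [hu2, List.nodup_append] at hnd2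
      exact hnd2.2.2 a ha a (by simp [hat']) rfl
end Comb
section Decomp

open List

/-- Structural decomposition lemma for `va ++ u ++ u` with `u` fresh. -/
theorem decomp_append_uu {u va t t' x y z : List ℕ}
    (hclean : ∀ a ∈ u, a ∉ va)
    (heq : va ++ u ++ u = x ++ t ++ y ++ t' ++ z) (htne : t ≠ [])
    (ht' : t' = t ∨ t' = t.reverse) :
    (∃ r, va = x ++ t ++ y ++ t' ++ r ∧ z = r ++ u ++ u) ∨
    (∃ x₀, x = va ++ x₀ ∧ u ++ u = x₀ ++ t ++ y ++ t' ++ z) := by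
  have hmem' := mem_of_or_rev ht'
  have hlt' := length_or_rev ht'
  have ht'ne : t' ≠ [] := by
    intro h; apply htne
    rcases ht' with rfl | h2
    · exact h
    · have := congrArg List.length h; rw [h2] at this; simpa using
        List.eq_nil_of_length_eq_zero (by simpa using this)
  set n := va.length with hn
  have H : va ++ (u ++ u) = x ++ (t ++ (y ++ (t' ++ z))) := by
    simpa [List.append_assoc] using heq
  -- suffix fact: if the prefix before `t'` is at least `n` long, then `t' ++ z` is inside `u ++ u`
  have hsuffix : n ≤ x.length + t.length + y.length → ∀ b ∈ t', b ∈ u := by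
    intro hge b hb
    have H2 : (x ++ t ++ y) ++ (t' ++ z) = va ++ (u ++ u) := by
      simpa [List.append_assoc] using H.symm
    have hsuf : t' ++ z <:+ u ++ u := by
      refine List.suffix_of_suffix_length_le ⟨_, H2⟩ (List.suffix_append va (u ++ u)) ?_
      have := congrArg List.length H2
      simp only [List.length_append] at this
      simp only [List.length_append]
      omega
    have : b ∈ u ++ u := hsuf.subset (by simp [hb])
    simpa using this
  by_cases hA : ∃ a ∈ t, a ∈ u
  · -- `t` lies inside `u ++ u`
    obtain ⟨a, hat, hau⟩ := hA
    right
    -- first : x.length + t.length > n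
    have h1 : n < x.length + t.length := by
      by_contra hle
      push_neg at hle
      have hpre : x ++ t <+: va := by
        refine List.prefix_of_prefix_length_le ⟨_, by simpa [List.append_assoc] using H.symm⟩
          (va.prefix_append (u ++ u)) ?_
        simpa using hle
      exact hclean a hau (hpre.subset (by simp [hat]))
    -- purity: every element of t is in u
    have hpure : ∀ b ∈ t, b ∈ u := by
      intro b hb
      exact hsuffix (by omega) b ((hmem' b).2 hb)
    -- x has length at least n
    have h2 : n ≤ x.length := by
      by_contra hlt
      push_neg at hlt
      obtain ⟨b, t₂, rfl⟩ := List.exists_cons_of_ne_nil htne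
      have hpre : x ++ [b] <+: va := by
        refine List.prefix_of_prefix_length_le ?_ (va.prefix_append (u ++ u)) ?_
        · exact ⟨t₂ ++ (y ++ (t' ++ z)), by simpa [List.append_assoc] using H.symm⟩
        · simp; omega
      exact hclean b (hpure b (by simp)) (hpre.subset (by simp))
    have hpre : va <+: x := by
      refine List.prefix_of_prefix_length_le (va.prefix_append (u ++ u)) ?_ h2
      exact ⟨t ++ (y ++ (t' ++ z)), by simpa [List.append_assoc] using H.symm⟩
    obtain ⟨x₀, rfl⟩ := hpre
    refine ⟨x₀, rfl, ?_⟩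
    have H3 : va ++ (u ++ u) = va ++ (x₀ ++ (t ++ (y ++ (t' ++ z)))) := by
      simpa [List.append_assoc] using H
    have := List.append_cancel_left H3
    simpa [List.append_assoc] using this
  · -- `t` lies inside `va`
    push_neg at hA
    left
    have h1 : x.length + t.length + y.length < n := by
      by_contra hge
      push_neg at hge
      obtain ⟨b, hb⟩ := List.exists_mem_of_ne_nil _ ht'ne
      exact hA b ((hmem' b).1 hb) (hsuffix hge b hb)
    have h2 : x.length + t.length + y.length + t'.length ≤ n := by
      by_contra hgt
      push_neg at hgt
      -- straddling t' : contradiction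
      have hdropva : (va ++ (u ++ u)).drop n = u ++ u := by
        simp [List.drop_append, hn]
      have hdrop2 : (x ++ (t ++ (y ++ (t' ++ z)))).drop n
          = t'.drop (n - (x.length + t.length + y.length)) ++ z := by
        rw [List.drop_append, List.drop_eq_nil_of_le (by omega), List.nil_append,
          List.drop_append, List.drop_eq_nil_of_le (by omega), List.nil_append,
          List.drop_append, List.drop_eq_nil_of_le (by omega), List.nil_append,
          List.drop_append,
          show n - x.length - t.length - y.length - t'.length = 0 by omega, List.drop_zero]
        congr 2
        omega
      have huu : u ++ u = t'.drop (n - (x.length + t.length + y.length)) ++ z := by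
        rw [← hdropva, H, hdrop2]
      have hne : t'.drop (n - (x.length + t.length + y.length)) ≠ [] := by
        intro h
        have := congrArg List.length h
        simp at this
        omega
      obtain ⟨b, hb⟩ := List.exists_mem_of_ne_nil _ hne
      have hbt' : b ∈ t' := (List.drop_suffix _ t').subset hb
      have hbu : b ∈ u := by
        have : b ∈ u ++ u := by rw [huu]; simp [hb]
        simpa using this
      exact hA b ((hmem' b).1 hbt') hbu
    have hpre : x ++ t ++ y ++ t' <+: va := by
      refine List.prefix_of_prefix_length_le ?_ (va.prefix_append (u ++ u)) ?_
      · exact ⟨z, by simpa [List.append_assoc] using H.symm⟩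
      · simp only [List.length_append]; omega
    obtain ⟨r, hr⟩ := hpre
    refine ⟨r, hr.symm, ?_⟩
    have H4 : (x ++ t ++ y ++ t') ++ (r ++ (u ++ u)) = (x ++ t ++ y ++ t') ++ z := by
      calc (x ++ t ++ y ++ t') ++ (r ++ (u ++ u)) = ((x ++ t ++ y ++ t') ++ r) ++ (u ++ u) := by
            simp [List.append_assoc]
        _ = va ++ (u ++ u) := by rw [hr]
        _ = (x ++ t ++ y ++ t') ++ z := by simpa [List.append_assoc] using H
    have := List.append_cancel_left H4
    simp [this, List.append_assoc]

end Decomp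
section Decomp2

open List

/-- Structural decomposition lemma for `u ++ u ++ va` with `u` fresh. -/
theorem decomp_uu_append {u va t t' x y z : List ℕ}
    (hclean : ∀ a ∈ u, a ∉ va)
    (heq : u ++ u ++ va = x ++ t ++ y ++ t' ++ z) (htne : t ≠ [])
    (ht' : t' = t ∨ t' = t.reverse) :
    (∃ x₁, x = u ++ u ++ x₁ ∧ va = x₁ ++ t ++ y ++ t' ++ z) ∨
    (∃ z₀, z = z₀ ++ va ∧ u ++ u = x ++ t ++ y ++ t' ++ z₀) := by
  have hmem' := mem_of_or_rev ht'
  have hlt' := length_or_rev ht'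
  have ht'ne : t' ≠ [] := by
    intro h; apply htne
    have := congrArg List.length h
    rw [hlt'] at this
    exact List.eq_nil_of_length_eq_zero (by simpa using this)
  set m := u.length with hm
  have H : (u ++ u) ++ va = x ++ (t ++ (y ++ (t' ++ z))) := by
    simpa [List.append_assoc] using heq
  -- if the prefix before t' covers u ++ u then t' ++ z is inside va
  have hsuffix : 2 * m ≤ x.length + t.length + y.length → ∀ b ∈ t', b ∈ va := by
    intro hge b hb
    have H2 : (x ++ t ++ y) ++ (t' ++ z) = (u ++ u) ++ va := by
      simpa [List.append_assoc] using H.symm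
    have hsuf : t' ++ z <:+ va := by
      refine List.suffix_of_suffix_length_le ⟨_, H2⟩ (List.suffix_append (u ++ u) va) ?_
      have := congrArg List.length H2
      simp only [List.length_append] at this
      simp only [List.length_append]
      omega
    exact hsuf.subset (by simp [hb])
  -- if a prefix is short it lies inside u ++ u
  have hprefixu : ∀ p q : List ℕ, (u ++ u) ++ va = p ++ q → p.length ≤ 2 * m →
      ∀ b ∈ p, b ∈ u := by
    intro p q hpq hle b hb
    have hpre : p <+: u ++ u := by
      refine List.prefix_of_prefix_length_le ⟨q, hpq.symm⟩ ((u ++ u).prefix_append va) ?_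
      simp only [List.length_append]
      omega
    have : b ∈ u ++ u := hpre.subset hb
    simpa using this
  by_cases hA : ∃ a ∈ t, a ∈ u
  · -- t inside u ++ u : conclusion right
    obtain ⟨a, hat, hau⟩ := hA
    right
    have hpure : ∀ b ∈ t, b ∈ u := by
      -- first show x.length + t.length + y.length < 2 * m using that t' has a u-letter
      have h1 : x.length + t.length + y.length < 2 * m := by
        by_contra hge
        push_neg at hge
        have : a ∈ va := hsuffix hge a ((hmem' a).2 hat)
        exact hclean a hau this
      intro b hb
      exact hprefixu (x ++ t) (y ++ (t' ++ z)) (by simpa [List.append_assoc] using H)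
        (by simp; omega) b (by simp [hb])
    -- t' also consists of u-letters, and the whole x++t++y++t' fits inside u++u
    have h1 : x.length + t.length + y.length < 2 * m := by
      by_contra hge
      push_neg at hge
      obtain ⟨b, hb⟩ := List.exists_mem_of_ne_nil _ ht'ne
      have hbva : b ∈ va := hsuffix hge b hb
      exact hclean b (hpure b ((hmem' b).1 hb)) hbva
    have h2 : x.length + t.length + y.length + t'.length ≤ 2 * m := by
      by_contra hgt
      push_neg at hgt
      -- t' straddles the border between u++u and va
      have hdropuu : ((u ++ u) ++ va).drop (2 * m) = va := by
        rw [List.drop_append,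
          List.drop_eq_nil_of_le (by simp only [List.length_append]; omega), List.nil_append,
          show 2 * m - (u ++ u).length = 0 by simp only [List.length_append]; omega,
          List.drop_zero]
      have hdrop2 : (x ++ (t ++ (y ++ (t' ++ z)))).drop (2 * m)
          = t'.drop (2 * m - (x.length + t.length + y.length)) ++ z := by
        rw [List.drop_append, List.drop_eq_nil_of_le (by omega), List.nil_append,
          List.drop_append, List.drop_eq_nil_of_le (by omega), List.nil_append,
          List.drop_append, List.drop_eq_nil_of_le (by omega), List.nil_append,
          List.drop_append,
          show 2 * m - x.length - t.length - y.length - t'.length = 0 by omega, List.drop_zero]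
        congr 2
        omega
      have hva : va = t'.drop (2 * m - (x.length + t.length + y.length)) ++ z := by
        rw [← hdropuu, H, hdrop2]
      have hne : t'.drop (2 * m - (x.length + t.length + y.length)) ≠ [] := by
        intro h
        have := congrArg List.length h
        simp at this
        omega
      obtain ⟨b, hb⟩ := List.exists_mem_of_ne_nil _ hne
      have hbt' : b ∈ t' := (List.drop_suffix _ t').subset hb
      have hbva : b ∈ va := by rw [hva]; simp [hb]
      exact hclean b (hpure b ((hmem' b).1 hbt')) hbva
    have hpre : x ++ t ++ y ++ t' <+: u ++ u := by
      refine List.prefix_of_prefix_length_le ?_ ((u ++ u).prefix_append va) ?_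
      · exact ⟨z, by simpa [List.append_assoc] using H.symm⟩
      · simp only [List.length_append]; omega
    obtain ⟨z₀, hz₀⟩ := hpre
    refine ⟨z₀, ?_, hz₀.symm⟩
    have H4 : (x ++ t ++ y ++ t') ++ (z₀ ++ va) = (x ++ t ++ y ++ t') ++ z := by
      calc (x ++ t ++ y ++ t') ++ (z₀ ++ va) = ((x ++ t ++ y ++ t') ++ z₀) ++ va := by
            simp [List.append_assoc]
        _ = (u ++ u) ++ va := by rw [hz₀]
        _ = (x ++ t ++ y ++ t') ++ z := by simpa [List.append_assoc] using H
    exact (List.append_cancel_left H4).symm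
  · -- t inside va : conclusion left
    push_neg at hA
    left
    have h2 : 2 * m ≤ x.length := by
      by_contra hlt
      push_neg at hlt
      obtain ⟨b, t₂, rfl⟩ := List.exists_cons_of_ne_nil htne
      have : b ∈ u := hprefixu (x ++ [b]) (t₂ ++ (y ++ (t' ++ z)))
        (by simpa [List.append_assoc] using H) (by simp; omega) b (by simp)
      exact hA b (by simp) this
    have hpre : u ++ u <+: x := by
      refine List.prefix_of_prefix_length_le ((u ++ u).prefix_append va) ?_
        (by simp only [List.length_append]; omega)
      exact ⟨t ++ (y ++ (t' ++ z)), by simpa [List.append_assoc] using H.symm⟩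
    obtain ⟨x₁, rfl⟩ := hpre
    refine ⟨x₁, by simp [List.append_assoc], ?_⟩
    have H3 : (u ++ u) ++ va = (u ++ u) ++ (x₁ ++ (t ++ (y ++ (t' ++ z)))) := by
      simpa [List.append_assoc] using H
    have := List.append_cancel_left H3
    simp [this, List.append_assoc]

end Decomp2
section MaxLemmas

open List

theorem isRRFactor_iff {t s : List ℕ} :
    IsRRFactor t s ↔ (t ≠ [] ∧ t.Nodup ∧
      ∃ t' x y z, (t' = t ∨ t' = t.reverse) ∧ s = x ++ t ++ y ++ t' ++ z) := by
  constructor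
  · rintro (⟨h1, h2, x, y, z, rfl⟩ | ⟨h1, h2, x, y, z, rfl⟩)
    · exact ⟨h1, h2, t, x, y, z, Or.inl rfl, rfl⟩
    · exact ⟨h1, h2, t.reverse, x, y, z, Or.inr rfl, rfl⟩
  · rintro ⟨h1, h2, t', x, y, z, rfl | rfl, rfl⟩
    · exact Or.inl ⟨h1, h2, x, y, z, rfl⟩
    · exact Or.inr ⟨h1, h2, x, y, z, rfl⟩

theorem rr_ne_nil {t s : List ℕ} (h : IsRRFactor t s) : t ≠ [] := (isRRFactor_iff.1 h).1

theorem rr_nodup {t s : List ℕ} (h : IsRRFactor t s) : t.Nodup := (isRRFactor_iff.1 h).2.1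

theorem rr_extend_right {t va b : List ℕ} (h : IsRRFactor t va) : IsRRFactor t (va ++ b) := by
  rw [isRRFactor_iff] at h ⊢
  obtain ⟨h1, h2, t', x, y, z, ht', rfl⟩ := h
  exact ⟨h1, h2, t', x, y, z ++ b, ht', by simp [List.append_assoc]⟩

theorem rr_extend_left {t va b : List ℕ} (h : IsRRFactor t va) : IsRRFactor t (b ++ va) := by
  rw [isRRFactor_iff] at h ⊢
  obtain ⟨h1, h2, t', x, y, z, ht', rfl⟩ := h
  exact ⟨h1, h2, t', b ++ x, y, z, ht', by simp [List.append_assoc]⟩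

theorem rr_subset {t s : List ℕ} (h : IsRRFactor t s) : ∀ a ∈ t, a ∈ s := by
  rw [isRRFactor_iff] at h
  obtain ⟨h1, h2, t', x, y, z, ht', rfl⟩ := h
  intro a ha; simp [ha]

variable {u va : List ℕ}

theorem rr_u_append (hu : u ≠ []) (hund : u.Nodup) : IsRRFactor u (va ++ u ++ u) :=
  Or.inl ⟨hu, hund, va, [], [], by simp⟩

theorem rr_u_prepend (hu : u ≠ []) (hund : u.Nodup) : IsRRFactor u (u ++ u ++ va) :=
  Or.inl ⟨hu, hund, [], [], va, by simp⟩

/-- `u` is a maximal repeat/return factor of `va ++ u ++ u`. -/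
theorem max_u_append (hu : u ≠ []) (hund : u.Nodup) (hclean : ∀ a ∈ u, a ∉ va) :
    IsMaximalRR u (va ++ u ++ u) := by
  refine ⟨rr_u_append hu hund, fun v hv hinf => ?_⟩
  obtain ⟨hvne, hvnd, t', x, y, z, ht', hdec⟩ := isRRFactor_iff.1 hv
  rcases decomp_append_uu hclean hdec hvne ht' with ⟨r, hva, _⟩ | ⟨x₀, _, huu⟩
  · exfalso
    obtain ⟨a, ha⟩ := List.exists_mem_of_ne_nil u hu
    have hav : a ∈ v := hinf.sublist.subset ha
    exact hclean a ha (by rw [hva]; simp [hav])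
  · exact (factor_of_uu hund huu hvne ht').1.sublist.length_le

/-- `u` is a maximal repeat/return factor of `u ++ u ++ va`. -/
theorem max_u_prepend (hu : u ≠ []) (hund : u.Nodup) (hclean : ∀ a ∈ u, a ∉ va) :
    IsMaximalRR u (u ++ u ++ va) := by
  refine ⟨rr_u_prepend hu hund, fun v hv hinf => ?_⟩
  obtain ⟨hvne, hvnd, t', x, y, z, ht', hdec⟩ := isRRFactor_iff.1 hv
  rcases decomp_uu_append hclean hdec hvne ht' with ⟨x₁, _, hva⟩ | ⟨z₀, _, huu⟩
  · exfalso
    obtain ⟨a, ha⟩ := List.exists_mem_of_ne_nil u hu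
    have hav : a ∈ v := hinf.sublist.subset ha
    exact hclean a ha (by rw [hva]; simp [hav])
  · exact (factor_of_uu hund huu hvne ht').1.sublist.length_le

theorem max_extend_append (hund : u.Nodup) (hclean : ∀ a ∈ u, a ∉ va) {t : List ℕ}
    (h : IsMaximalRR t va) : IsMaximalRR t (va ++ u ++ u) := by
  refine ⟨by rw [List.append_assoc]; exact rr_extend_right h.1, fun v hv hinf => ?_⟩
  obtain ⟨hvne, hvnd, t', x, y, z, ht', hdec⟩ := isRRFactor_iff.1 hv
  rcases decomp_append_uu hclean hdec hvne ht' with ⟨r, hva, _⟩ | ⟨x₀, _, huu⟩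
  · refine h.2 v (isRRFactor_iff.2 ⟨hvne, hvnd, t', x, y, r, ht', hva⟩) hinf
  · exfalso
    obtain ⟨a, ha⟩ := List.exists_mem_of_ne_nil t (rr_ne_nil h.1)
    have hau : a ∈ u := (factor_of_uu hund huu hvne ht').1.sublist.subset
      (hinf.sublist.subset ha)
    exact hclean a hau (rr_subset h.1 a ha)

theorem max_extend_prepend (hund : u.Nodup) (hclean : ∀ a ∈ u, a ∉ va) {t : List ℕ}
    (h : IsMaximalRR t va) : IsMaximalRR t (u ++ u ++ va) := by
  refine ⟨rr_extend_left h.1, fun v hv hinf => ?_⟩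
  obtain ⟨hvne, hvnd, t', x, y, z, ht', hdec⟩ := isRRFactor_iff.1 hv
  rcases decomp_uu_append hclean hdec hvne ht' with ⟨x₁, _, hva⟩ | ⟨z₀, _, huu⟩
  · refine h.2 v (isRRFactor_iff.2 ⟨hvne, hvnd, t', x₁, y, z, ht', hva⟩) hinf
  · exfalso
    obtain ⟨a, ha⟩ := List.exists_mem_of_ne_nil t (rr_ne_nil h.1)
    have hau : a ∈ u := (factor_of_uu hund huu hvne ht').1.sublist.subset
      (hinf.sublist.subset ha)
    exact hclean a hau (rr_subset h.1 a ha)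

end MaxLemmas
section Char

open List

variable {u va : List ℕ}

/-- Characterization of immediate successors of `va ++ u ++ u`. -/
theorem immSucc_append_uu_iff (hu : u ≠ []) (hund : u.Nodup)
    (hclean : ∀ a ∈ u, a ∉ va) (s : List ℕ) :
    ImmSucc (va ++ u ++ u) s ↔
      (AOEquiv va s ∨ ∃ t x y z, IsMaximalRR t va ∧
        (va = x ++ t ++ y ++ t ++ z ∨ va = x ++ t ++ y ++ t.reverse ++ z) ∧
        AOEquiv (x ++ y ++ z ++ u ++ u) s) := by
  constructor
  · rintro ⟨t, x, y, z, hmax, hdec, haoe⟩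
    have htne : t ≠ [] := rr_ne_nil hmax.1
    have htnd : t.Nodup := rr_nodup hmax.1
    have hdec' : ∃ t', (t' = t ∨ t' = t.reverse) ∧ va ++ u ++ u = x ++ t ++ y ++ t' ++ z := by
      rcases hdec with h | h
      · exact ⟨t, Or.inl rfl, h⟩
      · exact ⟨t.reverse, Or.inr rfl, h⟩
    obtain ⟨t', ht', hdec2⟩ := hdec'
    rcases decomp_append_uu hclean hdec2 htne ht' with ⟨r, hva, hz⟩ | ⟨x₀, hx, huu⟩
    · right
      refine ⟨t, x, y, r, ?_, ?_, ?_⟩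
      · refine ⟨isRRFactor_iff.2 ⟨htne, htnd, t', x, y, r, ht', hva⟩, fun v hv hinf => ?_⟩
        exact hmax.2 v (by rw [List.append_assoc]; exact rr_extend_right hv) hinf
      · rcases ht' with rfl | rfl
        · exact Or.inl hva
        · exact Or.inr hva
      · have : x ++ y ++ r ++ u ++ u = x ++ y ++ z := by
          rw [hz]; simp [List.append_assoc]
        rw [this]; exact haoe
    · left
      have hfac := factor_of_uu hund huu htne ht'
      have hlen : u.length ≤ t.length :=
        hmax.2 u (rr_u_append hu hund) hfac.1
      obtain ⟨hx0, hy0, hz0⟩ := hfac.2 (le_antisymm hfac.1.sublist.length_le hlen)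
      subst hx0 hy0 hz0
      have hxva : va = x ++ [] ++ [] := by rw [hx]; simp
      rw [hxva]; exact haoe
  · rintro (haoe | ⟨t, x, y, z, hmax, hdec, haoe⟩)
    · refine ⟨u, va, [], [], max_u_append hu hund hclean, Or.inl (by simp), ?_⟩
      simpa using haoe
    · refine ⟨t, x, y, z ++ u ++ u, max_extend_append hund hclean hmax, ?_, ?_⟩
      · rcases hdec with h | h
        · exact Or.inl (by rw [h]; simp [List.append_assoc])
        · exact Or.inr (by rw [h]; simp [List.append_assoc])
      · have : x ++ y ++ (z ++ u ++ u) = x ++ y ++ z ++ u ++ u := by simp [List.append_assoc]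
        rw [this]; exact haoe

/-- Characterization of immediate successors of `u ++ u ++ va`. -/
theorem immSucc_uu_append_iff (hu : u ≠ []) (hund : u.Nodup)
    (hclean : ∀ a ∈ u, a ∉ va) (s : List ℕ) :
    ImmSucc (u ++ u ++ va) s ↔
      (AOEquiv va s ∨ ∃ t x y z, IsMaximalRR t va ∧
        (va = x ++ t ++ y ++ t ++ z ∨ va = x ++ t ++ y ++ t.reverse ++ z) ∧
        AOEquiv (u ++ u ++ x ++ y ++ z) s) := by
  constructor
  · rintro ⟨t, x, y, z, hmax, hdec, haoe⟩
    have htne : t ≠ [] := rr_ne_nil hmax.1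
    have htnd : t.Nodup := rr_nodup hmax.1
    have hdec' : ∃ t', (t' = t ∨ t' = t.reverse) ∧ u ++ u ++ va = x ++ t ++ y ++ t' ++ z := by
      rcases hdec with h | h
      · exact ⟨t, Or.inl rfl, h⟩
      · exact ⟨t.reverse, Or.inr rfl, h⟩
    obtain ⟨t', ht', hdec2⟩ := hdec'
    rcases decomp_uu_append hclean hdec2 htne ht' with ⟨x₁, hx, hva⟩ | ⟨z₀, hz, huu⟩
    · right
      refine ⟨t, x₁, y, z, ?_, ?_, ?_⟩
      · refine ⟨isRRFactor_iff.2 ⟨htne, htnd, t', x₁, y, z, ht', hva⟩, fun v hv hinf => ?_⟩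
        exact hmax.2 v (rr_extend_left hv) hinf
      · rcases ht' with rfl | rfl
        · exact Or.inl hva
        · exact Or.inr hva
      · have hxx : u ++ u ++ x₁ ++ y ++ z = x ++ y ++ z := by rw [hx]
        rw [hxx]; exact haoe
    · left
      have hfac := factor_of_uu hund huu htne ht'
      have hlen : u.length ≤ t.length :=
        hmax.2 u (rr_u_prepend hu hund) hfac.1
      obtain ⟨hx0, hy0, hz0⟩ := hfac.2 (le_antisymm hfac.1.sublist.length_le hlen)
      subst hx0 hy0
      have hzva : va = [] ++ [] ++ z := by rw [hz, hz0]; simp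
      rw [hzva]; exact haoe
  · rintro (haoe | ⟨t, x, y, z, hmax, hdec, haoe⟩)
    · refine ⟨u, [], [], va, max_u_prepend hu hund hclean, Or.inl (by simp), ?_⟩
      simpa using haoe
    · refine ⟨t, u ++ u ++ x, y, z, max_extend_prepend hund hclean hmax, ?_, ?_⟩
      · rcases hdec with h | h
        · exact Or.inl (by rw [h]; simp [List.append_assoc])
        · exact Or.inr (by rw [h]; simp [List.append_assoc])
      · exact haoe

end Char
section DowPerm

open List

theorem dow_aoe {a b : List ℕ} (h : AOEquiv a b) (hd : IsDOW a) : IsDOW b := by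
  obtain ⟨f, rfl⟩ := h
  intro x
  have : x = f (f.symm x) := (f.apply_symm_apply x).symm
  rw [this, List.count_map_of_injective a f f.injective]
  exact hd _

theorem dow_immSucc {a b : List ℕ} (h : ImmSucc a b) (hd : IsDOW a) : IsDOW b := by
  obtain ⟨t, x, y, z, hmax, hdec, haoe⟩ := h
  have htnd := rr_nodup hmax.1
  refine dow_aoe haoe ?_
  intro c
  have hcount : ∀ t' : List ℕ, a = x ++ t ++ y ++ t' ++ z → t'.length = t.length →
      List.count c t' = List.count c t →
      List.count c (x ++ y ++ z) + 2 * List.count c t = List.count c a := by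
    intro t' hdec' _ hc
    rw [hdec']
    simp only [List.count_append, hc]
    omega
  have key : List.count c (x ++ y ++ z) + 2 * List.count c t = List.count c a := by
    rcases hdec with h | h
    · exact hcount t h rfl rfl
    · exact hcount t.reverse h (by simp) (by simp)
  have hct : List.count c t = 0 ∨ List.count c t = 1 := by
    by_cases hmem : c ∈ t
    · exact Or.inr (List.count_eq_one_of_mem htnd hmem)
    · exact Or.inl (List.count_eq_zero.2 hmem)
  rcases hd c with h0 | h2 <;> rcases hct with h | h <;> omega

theorem dow_succ {a b : List ℕ} (h : Successor a b) (hd : IsDOW a) : IsDOW b := by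
  induction h with
  | refl => exact hd
  | tail _ hbc ih => exact dow_immSucc hbc ih

/-- every DOW reduces to the empty word -/
theorem dow_succ_nil : ∀ n (c : List ℕ), c.length ≤ n → IsDOW c → Successor c [] := by
  intro n
  induction n with
  | zero =>
      intro c hc _
      have : c = [] := List.eq_nil_of_length_eq_zero (Nat.le_zero.1 hc)
      subst this; exact Relation.ReflTransGen.refl
  | succ n ih =>
      intro c hc hd
      rcases eq_or_ne c [] with rfl | hne
      · exact Relation.ReflTransGen.refl
      · -- c has a maximal RR factor
        obtain ⟨a, ha⟩ := List.exists_mem_of_ne_nil c hne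
        have hcount : List.count a c = 2 := by
          rcases hd a with h | h
          · exact absurd (List.count_eq_zero.1 h) (by simpa using ha)
          · exact h
        -- split c at the two occurrences of a
        obtain ⟨x, r, rfl⟩ := List.append_of_mem ha
        have har : a ∈ x ∨ a ∈ r := by
          have : List.count a x + (List.count a r + 1) = 2 := by
            simpa [List.count_append, List.count_cons] using hcount
          by_cases hx : a ∈ x
          · exact Or.inl hx
          · right
            have hx0 : List.count a x = 0 := List.count_eq_zero.2 hx
            rw [← List.count_pos_iff]
            omega
        have hsplit : ∃ x' y' z' : List ℕ, x ++ a :: r = x' ++ [a] ++ y' ++ [a] ++ z' := by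
          rcases har with hx | hr
          · obtain ⟨x1, x2, rfl⟩ := List.append_of_mem hx
            exact ⟨x1, x2, r, by simp⟩
          · obtain ⟨r1, r2, rfl⟩ := List.append_of_mem hr
            exact ⟨x, r1, r2, by simp⟩
        obtain ⟨x', y', z', heq⟩ := hsplit
        -- a maximal RR factor exists: pick one of greatest length
        classical
        set c' := x ++ a :: r with hc'
        have hP1 : ∃ t, IsRRFactor t c' ∧ t.length = 1 :=
          ⟨[a], Or.inl ⟨by simp, by simp, x', y', z', heq⟩, rfl⟩
        have hbound : ∀ t, IsRRFactor t c' → t.length ≤ c'.length := by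
          intro t htf
          obtain ⟨_, _, t', x1, y1, z1, _, hdec⟩ := isRRFactor_iff.1 htf
          rw [hdec]
          simp only [List.length_append]
          omega
        set P := fun n => ∃ t, IsRRFactor t c' ∧ t.length = n with hP
        have h1le : 1 ≤ c'.length := by
          simp [hc']
          omega
        have hspec : P (Nat.findGreatest P c'.length) :=
          Nat.findGreatest_spec h1le hP1
        obtain ⟨t, htf, htlen⟩ := hspec
        have hmax : IsMaximalRR t c' := by
          refine ⟨htf, fun v hv hinf => ?_⟩
          have : v.length ≤ Nat.findGreatest P c'.length :=
            Nat.le_findGreatest (hbound v hv) ⟨v, hv, rfl⟩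
          omega
        -- now delete t
        obtain ⟨htne, _, t', x1, y1, z1, ht', hdec⟩ := isRRFactor_iff.1 htf
        have hstep : ImmSucc c' (x1 ++ y1 ++ z1) := by
          refine ⟨t, x1, y1, z1, hmax, ?_, aoe_refl _⟩
          rcases ht' with rfl | rfl
          · exact Or.inl hdec
          · exact Or.inr hdec
        have hdow' : IsDOW (x1 ++ y1 ++ z1) := dow_immSucc hstep hd
        have hlen' : (x1 ++ y1 ++ z1).length ≤ n := by
          have := congrArg List.length hdec
          simp only [List.length_append, length_or_rev ht'] at this
          have hc'len : c'.length ≤ n + 1 := hc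
          simp only [List.length_append]
          have htpos : 0 < t.length := List.length_pos_iff.2 htne
          omega
        exact Relation.ReflTransGen.head hstep (ih _ hlen' hdow')

theorem dow_to_nil {c : List ℕ} (hd : IsDOW c) : Successor c [] :=
  dow_succ_nil c.length c le_rfl hd

end DowPerm
section Perm

open List

/-- There is a permutation of ℕ pushing any finite list away from a finite set. -/
theorem exists_clean_rep (u v : List ℕ) : ∃ v', AOEquiv v v' ∧ ∀ a ∈ u, a ∉ v' := by
  classical
  set N : ℕ := ((v ++ u).foldr max 0) + 1 with hN
  have hfold : ∀ (l : List ℕ) (a : ℕ), a ∈ l → a ≤ l.foldr max 0 := by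
    intro l
    induction l with
    | nil => intro a ha; simp at ha
    | cons b l ih =>
        intro a ha
        simp only [List.foldr_cons]
        rcases List.mem_cons.1 ha with rfl | h
        · exact le_max_left _ _
        · exact le_trans (ih a h) (le_max_right _ _)
  have hmem_lt : ∀ a ∈ v ++ u, a < N := by
    intro a ha
    have := hfold (v ++ u) a ha
    omega
  set g : ℕ → ℕ := fun x => if x < N then x + N else if x < 2 * N then x - N else x with hg
  have hinv : Function.Involutive g := by
    intro x
    simp only [hg]
    rcases lt_or_ge x N with h1 | h1
    · have h2 : ¬ (x + N < N) := by omega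
      have h3 : x + N < 2 * N := by omega
      simp only [if_pos h1, if_neg h2, if_pos h3]
      omega
    · rcases lt_or_ge x (2 * N) with h2 | h2
      · have h3 : x - N < N := by omega
        simp only [if_neg (not_lt.2 h1), if_pos h2, if_pos h3]
        omega
      · have h3 : ¬ (x < N) := by omega
        simp only [if_neg h3, if_neg (not_lt.2 h2), if_neg h3, if_neg (not_lt.2 h2)]
  set π : ℕ ≃ ℕ := Function.Involutive.toPerm g hinv with hπ
  refine ⟨v.map π, ⟨π, rfl⟩, ?_⟩
  intro a ha hmem
  obtain ⟨b, hb, hab⟩ := List.mem_map.1 hmem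
  have hbN : b < N := hmem_lt b (by simp [hb])
  have haN : a < N := hmem_lt a (by simp [ha])
  have : π b = b + N := by
    show g b = b + N
    simp only [hg, if_pos hbN]
  rw [this] at hab
  omega

/-- A bijection between clean lists can be modified to fix `u` pointwise. -/
theorem exists_perm_fix (u d b : List ℕ) (hcd : ∀ a ∈ u, a ∉ d) (hcb : ∀ a ∈ u, a ∉ b)
    (h : AOEquiv d b) : ∃ g : ℕ ≃ ℕ, d.map g = b ∧ ∀ a ∈ u, g a = a := by
  classical
  obtain ⟨f, rfl⟩ := h
  -- induction over the finset of letters of u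
  have main : ∀ S : Finset ℕ, (∀ a ∈ S, a ∉ d ∧ a ∉ d.map f) →
      ∃ g : ℕ ≃ ℕ, d.map g = d.map f ∧ ∀ a ∈ S, g a = a := by
    intro S
    induction S using Finset.induction_on with
    | empty => exact fun _ => ⟨f, rfl, by simp⟩
    | @insert a S ha ih =>
        intro hS
        obtain ⟨g, hg, hfix⟩ := ih (fun x hx => hS x (Finset.mem_insert_of_mem hx))
        have had : a ∉ d := (hS a (Finset.mem_insert_self a S)).1
        have hab : a ∉ d.map f := (hS a (Finset.mem_insert_self a S)).2
        by_cases hga : g a = a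
        · exact ⟨g, hg, fun x hx => by
            rcases Finset.mem_insert.1 hx with rfl | hx
            · exact hga
            · exact hfix x hx⟩
        · refine ⟨g.trans (Equiv.swap (g a) a), ?_, ?_⟩
          · rw [← hg]
            refine List.map_congr_left ?_
            intro x hx
            have hx1 : g x ≠ g a := by
              intro hxe
              exact had (by rwa [g.injective hxe] at hx)
            have hx2 : g x ≠ a := by
              intro hxe
              apply hab
              rw [← hg, ← hxe]
              exact List.mem_map_of_mem (f := g) hx
            simp [Equiv.trans_apply, Equiv.swap_apply_of_ne_of_ne hx1 hx2]
          · intro x hx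
            rcases Finset.mem_insert.1 hx with rfl | hx2
            · simp [Equiv.trans_apply]
            · have hgx : g x = x := hfix x hx2
              have hx1 : x ≠ g a := by
                intro hxe
                apply ha
                have : g x = g a := by rw [hgx, hxe]
                rwa [← g.injective this]
              have hx3 : x ≠ a := fun hxe => ha (hxe ▸ hx2)
              simp [Equiv.trans_apply, hgx, Equiv.swap_apply_of_ne_of_ne hx1 hx3]
  obtain ⟨g, hg, hfix⟩ := main u.toFinset
    (fun x hx => ⟨hcd x (List.mem_toFinset.1 hx), hcb x (List.mem_toFinset.1 hx)⟩)
  exact ⟨g, hg, fun a ha => hfix a (List.mem_toFinset.2 ha)⟩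

theorem map_fix_eq {u : List ℕ} {g : ℕ ≃ ℕ} (h : ∀ a ∈ u, g a = a) : u.map g = u := by
  rw [List.map_congr_left h]
  exact List.map_id' u

/-- appending `u ++ u` respects equivalence of clean words -/
theorem aoe_append_uu {u d b : List ℕ} (hcd : ∀ a ∈ u, a ∉ d) (hcb : ∀ a ∈ u, a ∉ b)
    (h : AOEquiv d b) : AOEquiv (d ++ u ++ u) (b ++ u ++ u) := by
  obtain ⟨g, hg, hfix⟩ := exists_perm_fix u d b hcd hcb h
  exact ⟨g, by simp [List.map_append, hg, map_fix_eq hfix]⟩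

theorem aoe_prepend_uu {u d b : List ℕ} (hcd : ∀ a ∈ u, a ∉ d) (hcb : ∀ a ∈ u, a ∉ b)
    (h : AOEquiv d b) : AOEquiv (u ++ u ++ d) (u ++ u ++ b) := by
  obtain ⟨g, hg, hfix⟩ := exists_perm_fix u d b hcd hcb h
  exact ⟨g, by simp [List.map_append, hg, map_fix_eq hfix]⟩

end Perm
section Chains

open List

/-- an immediate-successor step landing on a word avoiding the letters of `u` -/
def CleanStep (u : List ℕ) (a b : List ℕ) : Prop := ImmSucc a b ∧ ∀ c ∈ u, c ∉ b

theorem clean_chain {u a v : List ℕ} (h : Successor a v) :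
    ∃ v', Relation.ReflTransGen (CleanStep u) a v' ∧ AOEquiv v v' := by
  induction h with
  | refl => exact ⟨a, Relation.ReflTransGen.refl, aoe_refl a⟩
  | @tail b c hab hbc ih =>
      obtain ⟨b', hchain, hbb'⟩ := ih
      obtain ⟨c', hcc', hc'clean⟩ := exists_clean_rep u c
      exact ⟨c', hchain.tail ⟨immSucc_congr_right (immSucc_congr_left hbb' hbc) hcc',
        hc'clean⟩, hcc'⟩

theorem chain_clean {u a v' : List ℕ} (h : Relation.ReflTransGen (CleanStep u) a v')
    (ha : ∀ c ∈ u, c ∉ a) : ∀ c ∈ u, c ∉ v' := by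
  induction h with
  | refl => exact ha
  | tail _ hbc _ => exact hbc.2

theorem chain_succ {u a v' : List ℕ} (h : Relation.ReflTransGen (CleanStep u) a v') :
    Successor a v' := by
  induction h with
  | refl => exact Relation.ReflTransGen.refl
  | tail _ hbc ih => exact ih.tail hbc.1

theorem immSucc_d_subset {a t x y z : List ℕ} (hdec : a = x ++ t ++ y ++ t ++ z ∨
    a = x ++ t ++ y ++ t.reverse ++ z) : ∀ c, c ∈ x ++ y ++ z → c ∈ a := by
  intro c hc
  simp only [List.mem_append] at hc
  rcases hdec with rfl | rfl <;> simp only [List.mem_append] <;> tauto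

theorem lift_append {u a v' : List ℕ} (hu : u ≠ []) (hund : u.Nodup)
    (ha : ∀ c ∈ u, c ∉ a) (h : Relation.ReflTransGen (CleanStep u) a v') :
    Successor (a ++ u ++ u) (v' ++ u ++ u) := by
  induction h with
  | refl => exact Relation.ReflTransGen.refl
  | @tail b c hab hbc ih =>
      have hbclean : ∀ c ∈ u, c ∉ b := chain_clean hab ha
      obtain ⟨t, x, y, z, hmax, hdec, haoe⟩ := hbc.1
      have hdclean : ∀ c ∈ u, c ∉ x ++ y ++ z :=
        fun c hc hmem => hbclean c hc (immSucc_d_subset hdec c hmem)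
      have hstep : ImmSucc (b ++ u ++ u) (c ++ u ++ u) := by
        refine (immSucc_append_uu_iff hu hund hbclean _).2 (Or.inr ⟨t, x, y, z, hmax, hdec, ?_⟩)
        exact aoe_append_uu hdclean hbc.2 haoe
      exact ih.tail hstep

theorem lift_prepend {u a v' : List ℕ} (hu : u ≠ []) (hund : u.Nodup)
    (ha : ∀ c ∈ u, c ∉ a) (h : Relation.ReflTransGen (CleanStep u) a v') :
    Successor (u ++ u ++ a) (u ++ u ++ v') := by
  induction h with
  | refl => exact Relation.ReflTransGen.refl
  | @tail b c hab hbc ih =>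
      have hbclean : ∀ c ∈ u, c ∉ b := chain_clean hab ha
      obtain ⟨t, x, y, z, hmax, hdec, haoe⟩ := hbc.1
      have hdclean : ∀ c ∈ u, c ∉ x ++ y ++ z :=
        fun c hc hmem => hbclean c hc (immSucc_d_subset hdec c hmem)
      have hstep : ImmSucc (u ++ u ++ b) (u ++ u ++ c) := by
        refine (immSucc_uu_append_iff hu hund hbclean _).2 (Or.inr ⟨t, x, y, z, hmax, hdec, ?_⟩)
        have h1 : u ++ u ++ x ++ y ++ z = u ++ u ++ (x ++ y ++ z) := by
          simp [List.append_assoc]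
        rw [h1]
        exact aoe_prepend_uu hdclean hbc.2 haoe
      exact ih.tail hstep

theorem succ_append_of_succ {u w v : List ℕ} (hu : u ≠ []) (hund : u.Nodup)
    (hwclean : ∀ c ∈ u, c ∉ w) (h : Successor w v) : Successor (w ++ u ++ u) v :=
  Relation.ReflTransGen.head
    ((immSucc_append_uu_iff hu hund hwclean _).2 (Or.inl (aoe_refl w))) h

theorem succ_prepend_of_succ {u w v : List ℕ} (hu : u ≠ []) (hund : u.Nodup)
    (hwclean : ∀ c ∈ u, c ∉ w) (h : Successor w v) : Successor (u ++ u ++ w) v :=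
  Relation.ReflTransGen.head
    ((immSucc_uu_append_iff hu hund hwclean _).2 (Or.inl (aoe_refl w))) h

theorem succ_append_uu_of_succ {u w v : List ℕ} (hu : u ≠ []) (hund : u.Nodup)
    (hwclean : ∀ c ∈ u, c ∉ w) (hvclean : ∀ c ∈ u, c ∉ v) (h : Successor w v) :
    ∃ s, Successor (w ++ u ++ u) s ∧ AOEquiv (v ++ u ++ u) s := by
  obtain ⟨v', hchain, hvv'⟩ := clean_chain (u := u) h
  have hv'clean := chain_clean hchain hwclean
  exact ⟨v' ++ u ++ u, lift_append hu hund hwclean hchain,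
    aoe_append_uu hvclean hv'clean hvv'⟩

theorem succ_prepend_uu_of_succ {u w v : List ℕ} (hu : u ≠ []) (hund : u.Nodup)
    (hwclean : ∀ c ∈ u, c ∉ w) (hvclean : ∀ c ∈ u, c ∉ v) (h : Successor w v) :
    ∃ s, Successor (u ++ u ++ w) s ∧ AOEquiv (u ++ u ++ v) s := by
  obtain ⟨v', hchain, hvv'⟩ := clean_chain (u := u) h
  have hv'clean := chain_clean hchain hwclean
  exact ⟨u ++ u ++ v', lift_prepend hu hund hwclean hchain,
    aoe_prepend_uu hvclean hv'clean hvv'⟩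

theorem aoe_append_uu_cancel {u a b : List ℕ} (h : AOEquiv (a ++ u ++ u) (b ++ u ++ u)) :
    AOEquiv a b := by
  have h' : AOEquiv (a ++ (u ++ u)) (b ++ (u ++ u)) := by
    simpa [List.append_assoc] using h
  have hlen : a.length = b.length := by
    have := aoe_length h'
    simp only [List.length_append] at this
    omega
  exact (aoe_split h' hlen).1

theorem aoe_prepend_uu_cancel {u a b : List ℕ} (h : AOEquiv (u ++ u ++ a) (u ++ u ++ b)) :
    AOEquiv a b := (aoe_split h rfl).2

/-- Characterization of the successors of `w ++ u ++ u`. -/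
theorem succ_wuu_char {u w s : List ℕ} (hu : u ≠ []) (hund : u.Nodup)
    (hwclean : ∀ c ∈ u, c ∉ w) (h : Successor (w ++ u ++ u) s) :
    (∃ v, Successor w v ∧ AOEquiv v s) ∨
    (∃ v, Successor w v ∧ (∀ c ∈ u, c ∉ v) ∧ AOEquiv (v ++ u ++ u) s) := by
  induction h with
  | refl => exact Or.inr ⟨w, Relation.ReflTransGen.refl, hwclean, aoe_refl _⟩
  | @tail b c hab hbc ih =>
      rcases ih with ⟨v, hv, hvb⟩ | ⟨v, hv, hvclean, hvb⟩
      · obtain ⟨t, x, y, z, hmax, hdec, haoe⟩ := immSucc_congr_left (aoe_symm hvb) hbc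
        exact Or.inl ⟨x ++ y ++ z, hv.tail ⟨t, x, y, z, hmax, hdec, aoe_refl _⟩, haoe⟩
      · have hstep : ImmSucc (v ++ u ++ u) c := immSucc_congr_left (aoe_symm hvb) hbc
        rcases (immSucc_append_uu_iff hu hund hvclean _).1 hstep with
          haoe | ⟨t, x, y, z, hmax, hdec, haoe⟩
        · exact Or.inl ⟨v, hv, haoe⟩
        · refine Or.inr ⟨x ++ y ++ z, hv.tail ⟨t, x, y, z, hmax, hdec, aoe_refl _⟩,
            fun c' hc' hmem => hvclean c' hc' (immSucc_d_subset hdec c' hmem), haoe⟩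

/-- Characterization of the successors of `u ++ u ++ w`. -/
theorem succ_uuw_char {u w s : List ℕ} (hu : u ≠ []) (hund : u.Nodup)
    (hwclean : ∀ c ∈ u, c ∉ w) (h : Successor (u ++ u ++ w) s) :
    (∃ v, Successor w v ∧ AOEquiv v s) ∨
    (∃ v, Successor w v ∧ (∀ c ∈ u, c ∉ v) ∧ AOEquiv (u ++ u ++ v) s) := by
  induction h with
  | refl => exact Or.inr ⟨w, Relation.ReflTransGen.refl, hwclean, aoe_refl _⟩
  | @tail b c hab hbc ih =>
      rcases ih with ⟨v, hv, hvb⟩ | ⟨v, hv, hvclean, hvb⟩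
      · obtain ⟨t, x, y, z, hmax, hdec, haoe⟩ := immSucc_congr_left (aoe_symm hvb) hbc
        exact Or.inl ⟨x ++ y ++ z, hv.tail ⟨t, x, y, z, hmax, hdec, aoe_refl _⟩, haoe⟩
      · have hstep : ImmSucc (u ++ u ++ v) c := immSucc_congr_left (aoe_symm hvb) hbc
        rcases (immSucc_uu_append_iff hu hund hvclean _).1 hstep with
          haoe | ⟨t, x, y, z, hmax, hdec, haoe⟩
        · exact Or.inl ⟨v, hv, haoe⟩
        · refine Or.inr ⟨x ++ y ++ z, hv.tail ⟨t, x, y, z, hmax, hdec, aoe_refl _⟩,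
            fun c' hc' hmem => hvclean c' hc' (immSucc_d_subset hdec c' hmem), ?_⟩
          have h1 : u ++ u ++ (x ++ y ++ z) = u ++ u ++ x ++ y ++ z := by
            simp [List.append_assoc]
          rw [h1]
          exact haoe

theorem succ_uu_nil {u : List ℕ} (hu : u ≠ []) (hund : u.Nodup) : Successor (u ++ u) [] := by
  have hstep : ImmSucc (([] : List ℕ) ++ u ++ u) [] :=
    (immSucc_append_uu_iff hu hund (by simp) _).2 (Or.inl (aoe_refl []))
  rw [List.nil_append] at hstep
  exact Relation.ReflTransGen.single hstep

end Chains
section Disj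

open List

variable {u w : List ℕ}

/-- A successor of `w` is never equivalent to `v ++ u ++ u`. -/
theorem not_aoe_append_uu (hu : u ≠ []) (hund : u.Nodup)
    (hcop : CoprimeDOW w (u ++ u)) {v₁ v : List ℕ}
    (hv₁ : Successor w v₁) (hv : Successor w v) (h : AOEquiv v₁ (v ++ u ++ u)) : False := by
  have h2 : Successor (u ++ u) [] := succ_uu_nil hu hund
  have haoe : AOEquiv (v ++ (u ++ u)) (v₁ ++ []) := by
    rw [List.append_nil, ← List.append_assoc]
    exact aoe_symm h
  obtain ⟨-, habs⟩ := hcop v v₁ (u ++ u) [] hv hv₁ Relation.ReflTransGen.refl h2 haoe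
  have := aoe_length habs
  simp only [List.length_append, List.length_nil] at this
  exact hu (List.eq_nil_of_length_eq_zero (by omega))

/-- A successor of `w` is never equivalent to `u ++ u ++ v` either. -/
theorem not_aoe_prepend_uu (hw : IsDOW w) (hu : u ≠ []) (hund : u.Nodup)
    (hcop : CoprimeDOW w (u ++ u)) {v₁ v : List ℕ}
    (hv₁ : Successor w v₁) (hv : Successor w v) (hvclean : ∀ c ∈ u, c ∉ v)
    (h : AOEquiv v₁ (u ++ u ++ v)) : False := by
  have hvdow : IsDOW v := dow_succ hv hw
  obtain ⟨v₀, hchain, hv0⟩ := clean_chain (u := u) (dow_to_nil hvdow)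
  have hv0nil : v₀ = [] := aoe_nil hv0
  subst hv0nil
  have hlift : Successor (u ++ u ++ v) (u ++ u) := by
    have := lift_prepend hu hund hvclean hchain
    simpa using this
  obtain ⟨s', hs', huus'⟩ := succ_congr (aoe_symm h) hlift
  have hws' : Successor w s' := hv₁.trans hs'
  have hwnil : Successor w [] := dow_to_nil hw
  have haoe : AOEquiv (s' ++ []) ([] ++ (u ++ u)) := by
    rw [List.append_nil, List.nil_append]
    exact aoe_symm huus'
  obtain ⟨-, habs⟩ := hcop s' [] [] (u ++ u) hws' hwnil (succ_uu_nil hu hund)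
    Relation.ReflTransGen.refl haoe
  have := aoe_length habs
  simp only [List.length_append, List.length_nil] at this
  exact hu (List.eq_nil_of_length_eq_zero (by omega))

/-- edges between the `v ++ uu` vertices. -/
theorem edge_append_uu_iff (hu : u ≠ []) (hund : u.Nodup)
    (hcop : CoprimeDOW w (u ++ u)) {va vb : List ℕ}
    (hva : Successor w va) (hvb : Successor w vb)
    (hvac : ∀ c ∈ u, c ∉ va) (hvbc : ∀ c ∈ u, c ∉ vb) :
    ImmSucc (va ++ u ++ u) (vb ++ u ++ u) ↔ ImmSucc va vb := by
  constructor
  · intro h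
    rcases (immSucc_append_uu_iff hu hund hvac _).1 h with
      haoe | ⟨t, x, y, z, hmax, hdec, haoe⟩
    · exact absurd haoe (fun hh => not_aoe_append_uu hu hund hcop hva hvb hh)
    · exact ⟨t, x, y, z, hmax, hdec, aoe_append_uu_cancel haoe⟩
  · rintro ⟨t, x, y, z, hmax, hdec, haoe⟩
    refine (immSucc_append_uu_iff hu hund hvac _).2 (Or.inr ⟨t, x, y, z, hmax, hdec, ?_⟩)
    exact aoe_append_uu
      (fun c hc hmem => hvac c hc (immSucc_d_subset hdec c hmem)) hvbc haoe

theorem edge_prepend_uu_iff (hw : IsDOW w) (hu : u ≠ []) (hund : u.Nodup)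
    (hcop : CoprimeDOW w (u ++ u)) {va vb : List ℕ}
    (hva : Successor w va) (hvb : Successor w vb)
    (hvac : ∀ c ∈ u, c ∉ va) (hvbc : ∀ c ∈ u, c ∉ vb) :
    ImmSucc (u ++ u ++ va) (u ++ u ++ vb) ↔ ImmSucc va vb := by
  constructor
  · intro h
    rcases (immSucc_uu_append_iff hu hund hvac _).1 h with
      haoe | ⟨t, x, y, z, hmax, hdec, haoe⟩
    · exact absurd haoe (fun hh => not_aoe_prepend_uu hw hu hund hcop hva hvb hvbc hh)
    · refine ⟨t, x, y, z, hmax, hdec, aoe_prepend_uu_cancel (u := u) ?_⟩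
      have h1 : u ++ u ++ (x ++ y ++ z) = u ++ u ++ x ++ y ++ z := by
        simp [List.append_assoc]
      rw [h1]
      exact haoe
  · rintro ⟨t, x, y, z, hmax, hdec, haoe⟩
    refine (immSucc_uu_append_iff hu hund hvac _).2 (Or.inr ⟨t, x, y, z, hmax, hdec, ?_⟩)
    have h1 : u ++ u ++ x ++ y ++ z = u ++ u ++ (x ++ y ++ z) := by
      simp [List.append_assoc]
    rw [h1]
    exact aoe_prepend_uu
      (fun c hc hmem => hvac c hc (immSucc_d_subset hdec c hmem)) hvbc haoe

/-- edges from a `v ++ uu` vertex down to a plain vertex. -/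
theorem edge_append_drop_iff (hu : u ≠ []) (hund : u.Nodup)
    (hcop : CoprimeDOW w (u ++ u)) {va vb : List ℕ}
    (hva : Successor w va) (hvb : Successor w vb)
    (hvac : ∀ c ∈ u, c ∉ va) :
    ImmSucc (va ++ u ++ u) vb ↔ AOEquiv va vb := by
  constructor
  · intro h
    rcases (immSucc_append_uu_iff hu hund hvac _).1 h with
      haoe | ⟨t, x, y, z, hmax, hdec, haoe⟩
    · exact haoe
    · exfalso
      exact not_aoe_append_uu hu hund hcop hvb
        (hva.tail ⟨t, x, y, z, hmax, hdec, aoe_refl _⟩) (aoe_symm haoe)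
  · intro h
    exact (immSucc_append_uu_iff hu hund hvac _).2 (Or.inl h)

theorem edge_prepend_drop_iff (hw : IsDOW w) (hu : u ≠ []) (hund : u.Nodup)
    (hcop : CoprimeDOW w (u ++ u)) {va vb : List ℕ}
    (hva : Successor w va) (hvb : Successor w vb)
    (hvac : ∀ c ∈ u, c ∉ va) :
    ImmSucc (u ++ u ++ va) vb ↔ AOEquiv va vb := by
  constructor
  · intro h
    rcases (immSucc_uu_append_iff hu hund hvac _).1 h with
      haoe | ⟨t, x, y, z, hmax, hdec, haoe⟩
    · exact haoe
    · exfalso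
      have hxyz : Successor w (x ++ y ++ z) := hva.tail ⟨t, x, y, z, hmax, hdec, aoe_refl _⟩
      have hxyzc : ∀ c ∈ u, c ∉ x ++ y ++ z :=
        fun c hc hmem => hvac c hc (immSucc_d_subset hdec c hmem)
      refine not_aoe_prepend_uu hw hu hund hcop hvb hxyz hxyzc (aoe_symm ?_)
      have h1 : u ++ u ++ (x ++ y ++ z) = u ++ u ++ x ++ y ++ z := by
        simp [List.append_assoc]
      rw [h1]
      exact haoe
  · intro h
    exact (immSucc_uu_append_iff hu hund hvac _).2 (Or.inl h)

/-- there are no edges from a plain vertex to a `v ++ uu` vertex. -/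
theorem no_edge_to_append (hu : u ≠ []) (hund : u.Nodup)
    (hcop : CoprimeDOW w (u ++ u)) {va vb : List ℕ}
    (hva : Successor w va) (hvb : Successor w vb) :
    ¬ ImmSucc va (vb ++ u ++ u) := by
  rintro ⟨t, x, y, z, hmax, hdec, haoe⟩
  exact not_aoe_append_uu hu hund hcop
    (hva.tail ⟨t, x, y, z, hmax, hdec, aoe_refl _⟩) hvb haoe

theorem no_edge_to_prepend (hw : IsDOW w) (hu : u ≠ []) (hund : u.Nodup)
    (hcop : CoprimeDOW w (u ++ u)) {va vb : List ℕ}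
    (hva : Successor w va) (hvb : Successor w vb) (hvbc : ∀ c ∈ u, c ∉ vb) :
    ¬ ImmSucc va (u ++ u ++ vb) := by
  rintro ⟨t, x, y, z, hmax, hdec, haoe⟩
  exact not_aoe_prepend_uu hw hu hund hcop
    (hva.tail ⟨t, x, y, z, hmax, hdec, aoe_refl _⟩) hvb hvbc haoe

end Disj
section DowMore

open List

theorem dow_append_uu_of {u w : List ℕ} (hw : IsDOW w) (hund : u.Nodup)
    (hfresh : ∀ a ∈ u, a ∉ w) : IsDOW (w ++ u ++ u) := by
  intro x
  simp only [List.count_append]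
  by_cases hx : x ∈ u
  · have h1 : List.count x u = 1 := List.count_eq_one_of_mem hund hx
    have h0 : List.count x w = 0 := List.count_eq_zero.2 (hfresh x hx)
    omega
  · have h1 : List.count x u = 0 := List.count_eq_zero.2 hx
    rcases hw x with h | h <;> omega

theorem dow_prepend_uu_of {u w : List ℕ} (hw : IsDOW w) (hund : u.Nodup)
    (hfresh : ∀ a ∈ u, a ∉ w) : IsDOW (u ++ u ++ w) := by
  intro x
  simp only [List.count_append]
  by_cases hx : x ∈ u
  · have h1 : List.count x u = 1 := List.count_eq_one_of_mem hund hx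
    have h0 : List.count x w = 0 := List.count_eq_zero.2 (hfresh x hx)
    omega
  · have h1 : List.count x u = 0 := List.count_eq_zero.2 hx
    rcases hw x with h | h <;> omega

theorem clean_of_dow_append {u v : List ℕ} (hund : u.Nodup)
    (h : IsDOW (v ++ u ++ u)) : ∀ a ∈ u, a ∉ v := by
  intro a ha hav
  have h1 : List.count a u = 1 := List.count_eq_one_of_mem hund ha
  have h2 : 1 ≤ List.count a v := List.count_pos_iff.2 hav
  rcases h a with h | h <;> simp only [List.count_append, h1] at h <;> omega

theorem clean_of_dow_prepend {u v : List ℕ} (hund : u.Nodup)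
    (h : IsDOW (u ++ u ++ v)) : ∀ a ∈ u, a ∉ v := by
  intro a ha hav
  have h1 : List.count a u = 1 := List.count_eq_one_of_mem hund ha
  have h2 : 1 ≤ List.count a v := List.count_pos_iff.2 hav
  rcases h a with h | h <;> simp only [List.count_append, h1] at h <;> omega

end DowMore
/-- doubling effect: if `w` and `uu` are coprime (with `u` a fresh
nonempty SOW), then `G_{wuu}` contains two distinct induced subgraphs isomorphic to
`G_w` (on the classes of the `v`'s and on the classes of the `vuu`'s, for `v` a vertex
of `G_w`); similarly for `G_{uuw}`, and moreover `G_{wuu} ≅ G_{uuw}`. -/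
theorem doubling_effect (w u : List ℕ) (hw : IsDOW w) (hu : u ≠ []) (hund : u.Nodup)
    (hfresh : ∀ a : ℕ, a ∈ u → a ∉ w) (hcop : CoprimeDOW w (u ++ u)) :
    (DigraphIso
        (fun a b : ({c : WGVertex (w ++ u ++ u) |
            ∃ v : List ℕ, Successor w v ∧ Quotient.mk aoSetoid v = c.1} : Set _) =>
          WGAdj (w ++ u ++ u) a.1 b.1)
        (WGAdj w)) ∧
      (DigraphIso
        (fun a b : ({c : WGVertex (w ++ u ++ u) |
            ∃ v : List ℕ, Successor w v ∧ Quotient.mk aoSetoid (v ++ u ++ u) = c.1} : Set _) =>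
          WGAdj (w ++ u ++ u) a.1 b.1)
        (WGAdj w)) ∧
      ({c : WGVertex (w ++ u ++ u) |
          ∃ v : List ℕ, Successor w v ∧ Quotient.mk aoSetoid v = c.1} ≠
        {c : WGVertex (w ++ u ++ u) |
          ∃ v : List ℕ, Successor w v ∧ Quotient.mk aoSetoid (v ++ u ++ u) = c.1}) ∧
      (DigraphIso
        (fun a b : ({c : WGVertex (u ++ u ++ w) |
            ∃ v : List ℕ, Successor w v ∧ Quotient.mk aoSetoid v = c.1} : Set _) =>
          WGAdj (u ++ u ++ w) a.1 b.1)
        (WGAdj w)) ∧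
      (DigraphIso
        (fun a b : ({c : WGVertex (u ++ u ++ w) |
            ∃ v : List ℕ, Successor w v ∧ Quotient.mk aoSetoid (u ++ u ++ v) = c.1} : Set _) =>
          WGAdj (u ++ u ++ w) a.1 b.1)
        (WGAdj w)) ∧
      DigraphIso (WGAdj (w ++ u ++ u)) (WGAdj (u ++ u ++ w)) := by
  classical
  have hwuu : IsDOW (w ++ u ++ u) := dow_append_uu_of hw hund hfresh
  have huuw : IsDOW (u ++ u ++ w) := dow_prepend_uu_of hw hund hfresh
  refine ⟨?_, ?_, ?_, ?_, ?_, ?_⟩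
  · -- Part 1 : plain subgraph of G_{wuu}
    exact ⟨⟨fun c => ⟨c.1.1, c.2⟩,
      fun d => ⟨⟨d.1, d.2.elim fun v hv =>
        ⟨v, succ_append_of_succ hu hund hfresh hv.1, hv.2⟩⟩, d.2⟩,
      fun c => Subtype.ext (Subtype.ext rfl),
      fun d => Subtype.ext rfl⟩,
      fun a b => Iff.rfl⟩
  · -- Part 2 : shifted subgraph of G_{wuu}
    have hpick : ∀ c : ({c : WGVertex (w ++ u ++ u) |
        ∃ v : List ℕ, Successor w v ∧ Quotient.mk aoSetoid (v ++ u ++ u) = c.1} : Set _),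
        ∃ v, Successor w v ∧ (∀ a ∈ u, a ∉ v) ∧
          Quotient.mk aoSetoid (v ++ u ++ u) = c.1.1 := by
      intro c
      obtain ⟨v, hv, he⟩ := c.2
      obtain ⟨s, hs, hsc⟩ := c.1.2
      have haoe : AOEquiv (v ++ u ++ u) s := quot_eq_iff.1 (he.trans hsc.symm)
      have hdow : IsDOW (v ++ u ++ u) := dow_aoe (aoe_symm haoe) (dow_succ hs hwuu)
      exact ⟨v, hv, clean_of_dow_append hund hdow, he⟩
    choose pk pks pkc pke using hpick
    have hrep : ∀ d : WGVertex w, ∃ v, Successor w v ∧ (∀ a ∈ u, a ∉ v) ∧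
        Quotient.mk aoSetoid v = d.1 := by
      intro d
      obtain ⟨v, hv, he⟩ := d.2
      obtain ⟨v', hchain, hvv'⟩ := clean_chain (u := u) hv
      exact ⟨v', chain_succ hchain, chain_clean hchain hfresh,
        by rw [← he]; exact Quotient.sound (aoe_symm hvv')⟩
    choose rp rps rpc rpe using hrep
    have hinvmem : ∀ d : WGVertex w, ∃ v', Successor (w ++ u ++ u) v' ∧
        Quotient.mk aoSetoid v' = Quotient.mk aoSetoid (rp d ++ u ++ u) := by
      intro d
      obtain ⟨s, hs1, hs2⟩ := succ_append_uu_of_succ hu hund hfresh (rpc d) (rps d)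
      exact ⟨s, hs1, Quotient.sound (aoe_symm hs2)⟩
    have hbij : Function.Bijective (fun c : ({c : WGVertex (w ++ u ++ u) |
        ∃ v : List ℕ, Successor w v ∧ Quotient.mk aoSetoid (v ++ u ++ u) = c.1} : Set _) =>
        (⟨Quotient.mk aoSetoid (pk c), ⟨pk c, pks c, rfl⟩⟩ : WGVertex w)) := by
      constructor
      · intro a b hab
        have h1 : Quotient.mk aoSetoid (pk a) = Quotient.mk aoSetoid (pk b) :=
          congrArg Subtype.val hab
        have h2 : AOEquiv (pk a) (pk b) := quot_eq_iff.1 h1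
        have h3 : Quotient.mk aoSetoid (pk a ++ u ++ u) =
            Quotient.mk aoSetoid (pk b ++ u ++ u) :=
          Quotient.sound (aoe_append_uu (pkc a) (pkc b) h2)
        apply Subtype.ext
        apply Subtype.ext
        rw [← pke a, ← pke b]
        exact h3
      · intro d
        refine ⟨⟨⟨Quotient.mk aoSetoid (rp d ++ u ++ u), hinvmem d⟩, ⟨rp d, rps d, rfl⟩⟩, ?_⟩
        apply Subtype.ext
        have h1 := pke ⟨⟨Quotient.mk aoSetoid (rp d ++ u ++ u), hinvmem d⟩, ⟨rp d, rps d, rfl⟩⟩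
        have h2 : AOEquiv (pk ⟨⟨Quotient.mk aoSetoid (rp d ++ u ++ u), hinvmem d⟩,
            ⟨rp d, rps d, rfl⟩⟩) (rp d) := aoe_append_uu_cancel (quot_eq_iff.1 h1)
        refine Eq.trans ?_ (rpe d)
        exact Quotient.sound h2
    refine ⟨Equiv.ofBijective _ hbij, ?_⟩
    intro a b
    show ClassAdj (Quotient.mk aoSetoid (pk a)) (Quotient.mk aoSetoid (pk b)) ↔
      ClassAdj a.1.1 b.1.1
    rw [← pke a, ← pke b, classAdj_iff, classAdj_iff]
    exact (edge_append_uu_iff hu hund hcop (pks a) (pks b) (pkc a) (pkc b)).symm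
  · -- Part 3 : the two subgraphs are distinct
    intro heq
    have hx : (⟨Quotient.mk aoSetoid w,
        ⟨w, succ_append_of_succ hu hund hfresh Relation.ReflTransGen.refl, rfl⟩⟩ :
        WGVertex (w ++ u ++ u)) ∈ {c : WGVertex (w ++ u ++ u) |
          ∃ v : List ℕ, Successor w v ∧ Quotient.mk aoSetoid v = c.1} :=
      ⟨w, Relation.ReflTransGen.refl, rfl⟩
    rw [heq] at hx
    obtain ⟨v, hv, he⟩ := hx
    exact not_aoe_append_uu hu hund hcop Relation.ReflTransGen.refl hv
      (aoe_symm (quot_eq_iff.1 he))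
  · -- Part 4 : plain subgraph of G_{uuw}
    exact ⟨⟨fun c => ⟨c.1.1, c.2⟩,
      fun d => ⟨⟨d.1, d.2.elim fun v hv =>
        ⟨v, succ_prepend_of_succ hu hund hfresh hv.1, hv.2⟩⟩, d.2⟩,
      fun c => Subtype.ext (Subtype.ext rfl),
      fun d => Subtype.ext rfl⟩,
      fun a b => Iff.rfl⟩
  · -- Part 5 : shifted subgraph of G_{uuw}
    have hpick : ∀ c : ({c : WGVertex (u ++ u ++ w) |
        ∃ v : List ℕ, Successor w v ∧ Quotient.mk aoSetoid (u ++ u ++ v) = c.1} : Set _),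
        ∃ v, Successor w v ∧ (∀ a ∈ u, a ∉ v) ∧
          Quotient.mk aoSetoid (u ++ u ++ v) = c.1.1 := by
      intro c
      obtain ⟨v, hv, he⟩ := c.2
      obtain ⟨s, hs, hsc⟩ := c.1.2
      have haoe : AOEquiv (u ++ u ++ v) s := quot_eq_iff.1 (he.trans hsc.symm)
      have hdow : IsDOW (u ++ u ++ v) := dow_aoe (aoe_symm haoe) (dow_succ hs huuw)
      exact ⟨v, hv, clean_of_dow_prepend hund hdow, he⟩
    choose pk pks pkc pke using hpick
    have hrep : ∀ d : WGVertex w, ∃ v, Successor w v ∧ (∀ a ∈ u, a ∉ v) ∧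
        Quotient.mk aoSetoid v = d.1 := by
      intro d
      obtain ⟨v, hv, he⟩ := d.2
      obtain ⟨v', hchain, hvv'⟩ := clean_chain (u := u) hv
      exact ⟨v', chain_succ hchain, chain_clean hchain hfresh,
        by rw [← he]; exact Quotient.sound (aoe_symm hvv')⟩
    choose rp rps rpc rpe using hrep
    have hinvmem : ∀ d : WGVertex w, ∃ v', Successor (u ++ u ++ w) v' ∧
        Quotient.mk aoSetoid v' = Quotient.mk aoSetoid (u ++ u ++ rp d) := by
      intro d
      obtain ⟨s, hs1, hs2⟩ := succ_prepend_uu_of_succ hu hund hfresh (rpc d) (rps d)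
      exact ⟨s, hs1, Quotient.sound (aoe_symm hs2)⟩
    have hbij : Function.Bijective (fun c : ({c : WGVertex (u ++ u ++ w) |
        ∃ v : List ℕ, Successor w v ∧ Quotient.mk aoSetoid (u ++ u ++ v) = c.1} : Set _) =>
        (⟨Quotient.mk aoSetoid (pk c), ⟨pk c, pks c, rfl⟩⟩ : WGVertex w)) := by
      constructor
      · intro a b hab
        have h1 : Quotient.mk aoSetoid (pk a) = Quotient.mk aoSetoid (pk b) :=
          congrArg Subtype.val hab
        have h2 : AOEquiv (pk a) (pk b) := quot_eq_iff.1 h1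
        have h3 : Quotient.mk aoSetoid (u ++ u ++ pk a) =
            Quotient.mk aoSetoid (u ++ u ++ pk b) :=
          Quotient.sound (aoe_prepend_uu (pkc a) (pkc b) h2)
        apply Subtype.ext
        apply Subtype.ext
        rw [← pke a, ← pke b]
        exact h3
      · intro d
        refine ⟨⟨⟨Quotient.mk aoSetoid (u ++ u ++ rp d), hinvmem d⟩, ⟨rp d, rps d, rfl⟩⟩, ?_⟩
        apply Subtype.ext
        have h1 := pke ⟨⟨Quotient.mk aoSetoid (u ++ u ++ rp d), hinvmem d⟩, ⟨rp d, rps d, rfl⟩⟩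
        have h2 : AOEquiv (pk ⟨⟨Quotient.mk aoSetoid (u ++ u ++ rp d), hinvmem d⟩,
            ⟨rp d, rps d, rfl⟩⟩) (rp d) := aoe_prepend_uu_cancel (quot_eq_iff.1 h1)
        refine Eq.trans ?_ (rpe d)
        exact Quotient.sound h2
    refine ⟨Equiv.ofBijective _ hbij, ?_⟩
    intro a b
    show ClassAdj (Quotient.mk aoSetoid (pk a)) (Quotient.mk aoSetoid (pk b)) ↔
      ClassAdj a.1.1 b.1.1
    rw [← pke a, ← pke b, classAdj_iff, classAdj_iff]
    exact (edge_prepend_uu_iff hw hu hund hcop (pks a) (pks b) (pkc a) (pkc b)).symm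
  · -- Part 6 : G_{wuu} ≅ G_{uuw}
    have hT2 : ∀ c : WGVertex (w ++ u ++ u),
        ¬ (∃ v, Successor w v ∧ Quotient.mk aoSetoid v = c.1) →
        ∃ v, Successor w v ∧ (∀ a ∈ u, a ∉ v) ∧
          Quotient.mk aoSetoid (v ++ u ++ u) = c.1 := by
      intro c hc
      obtain ⟨s, hs, hsc⟩ := c.2
      rcases succ_wuu_char hu hund hfresh hs with ⟨v, hv, haoe⟩ | ⟨v, hv, hcl, haoe⟩
      · exact absurd ⟨v, hv, by rw [← hsc]; exact Quotient.sound haoe⟩ hc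
      · exact ⟨v, hv, hcl, by rw [← hsc]; exact Quotient.sound haoe⟩
    have hT2' : ∀ c : WGVertex (u ++ u ++ w),
        ¬ (∃ v, Successor w v ∧ Quotient.mk aoSetoid v = c.1) →
        ∃ v, Successor w v ∧ (∀ a ∈ u, a ∉ v) ∧
          Quotient.mk aoSetoid (u ++ u ++ v) = c.1 := by
      intro c hc
      obtain ⟨s, hs, hsc⟩ := c.2
      rcases succ_uuw_char hu hund hfresh hs with ⟨v, hv, haoe⟩ | ⟨v, hv, hcl, haoe⟩
      · exact absurd ⟨v, hv, by rw [← hsc]; exact Quotient.sound haoe⟩ hc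
      · exact ⟨v, hv, hcl, by rw [← hsc]; exact Quotient.sound haoe⟩
    choose t2 t2s t2c t2e using hT2
    choose t2' t2s' t2c' t2e' using hT2'
    have hT1ex : ∀ c : WGVertex (w ++ u ++ u),
        (∃ v, Successor w v ∧ Quotient.mk aoSetoid v = c.1) →
        ∃ v, Successor w v ∧ Quotient.mk aoSetoid v = c.1 := fun _ h => h
    have hT1ex' : ∀ c : WGVertex (u ++ u ++ w),
        (∃ v, Successor w v ∧ Quotient.mk aoSetoid v = c.1) →
        ∃ v, Successor w v ∧ Quotient.mk aoSetoid v = c.1 := fun _ h => h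
    choose t1 t1s t1e using hT1ex
    choose t1' t1s' t1e' using hT1ex'
    set Φ : WGVertex (w ++ u ++ u) → WGVertex (u ++ u ++ w) := fun c =>
      if h : ∃ v, Successor w v ∧ Quotient.mk aoSetoid v = c.1 then
        ⟨c.1, h.elim fun v hv => ⟨v, succ_prepend_of_succ hu hund hfresh hv.1, hv.2⟩⟩
      else
        ⟨Quotient.mk aoSetoid (u ++ u ++ t2 c h),
          (succ_prepend_uu_of_succ hu hund hfresh (t2c c h) (t2s c h)).elim fun s hs =>
            ⟨s, hs.1, Quotient.sound (aoe_symm hs.2)⟩⟩ with hΦ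
    set Ψ : WGVertex (u ++ u ++ w) → WGVertex (w ++ u ++ u) := fun c =>
      if h : ∃ v, Successor w v ∧ Quotient.mk aoSetoid v = c.1 then
        ⟨c.1, h.elim fun v hv => ⟨v, succ_append_of_succ hu hund hfresh hv.1, hv.2⟩⟩
      else
        ⟨Quotient.mk aoSetoid (t2' c h ++ u ++ u),
          (succ_append_uu_of_succ hu hund hfresh (t2c' c h) (t2s' c h)).elim fun s hs =>
            ⟨s, hs.1, Quotient.sound (aoe_symm hs.2)⟩⟩ with hΨ
    have hΦpos : ∀ (c : WGVertex (w ++ u ++ u))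
        (h : ∃ v, Successor w v ∧ Quotient.mk aoSetoid v = c.1), (Φ c).1 = c.1 := by
      intro c h
      rw [hΦ]
      exact congrArg Subtype.val (dif_pos h)
    have hΦneg : ∀ (c : WGVertex (w ++ u ++ u))
        (h : ¬ ∃ v, Successor w v ∧ Quotient.mk aoSetoid v = c.1),
        (Φ c).1 = Quotient.mk aoSetoid (u ++ u ++ t2 c h) := by
      intro c h
      rw [hΦ]
      exact congrArg Subtype.val (dif_neg h)
    have hΨpos : ∀ (c : WGVertex (u ++ u ++ w))
        (h : ∃ v, Successor w v ∧ Quotient.mk aoSetoid v = c.1), (Ψ c).1 = c.1 := by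
      intro c h
      rw [hΨ]
      exact congrArg Subtype.val (dif_pos h)
    have hΨneg : ∀ (c : WGVertex (u ++ u ++ w))
        (h : ¬ ∃ v, Successor w v ∧ Quotient.mk aoSetoid v = c.1),
        (Ψ c).1 = Quotient.mk aoSetoid (t2' c h ++ u ++ u) := by
      intro c h
      rw [hΨ]
      exact congrArg Subtype.val (dif_neg h)
    -- Φ preserves / reflects the type-1 condition
    have hΦT1 : ∀ (c : WGVertex (w ++ u ++ u)),
        (∃ v, Successor w v ∧ Quotient.mk aoSetoid v = c.1) →
        ∃ v, Successor w v ∧ Quotient.mk aoSetoid v = (Φ c).1 := by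
      intro c h
      rw [hΦpos c h]; exact h
    have hΦT2 : ∀ (c : WGVertex (w ++ u ++ u))
        (h : ¬ ∃ v, Successor w v ∧ Quotient.mk aoSetoid v = c.1),
        ¬ ∃ v, Successor w v ∧ Quotient.mk aoSetoid v = (Φ c).1 := by
      intro c h hex
      obtain ⟨v₁, hv₁, he₁⟩ := hex
      rw [hΦneg c h] at he₁
      exact not_aoe_prepend_uu hw hu hund hcop hv₁ (t2s c h) (t2c c h) (quot_eq_iff.1 he₁)
    have hΨT1 : ∀ (c : WGVertex (u ++ u ++ w)),
        (∃ v, Successor w v ∧ Quotient.mk aoSetoid v = c.1) →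
        ∃ v, Successor w v ∧ Quotient.mk aoSetoid v = (Ψ c).1 := by
      intro c h
      rw [hΨpos c h]; exact h
    have hΨT2 : ∀ (c : WGVertex (u ++ u ++ w))
        (h : ¬ ∃ v, Successor w v ∧ Quotient.mk aoSetoid v = c.1),
        ¬ ∃ v, Successor w v ∧ Quotient.mk aoSetoid v = (Ψ c).1 := by
      intro c h hex
      obtain ⟨v₁, hv₁, he₁⟩ := hex
      rw [hΨneg c h] at he₁
      exact not_aoe_append_uu hu hund hcop hv₁ (t2s' c h) (quot_eq_iff.1 he₁)
    refine ⟨⟨Φ, Ψ, ?_, ?_⟩, ?_⟩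
    · -- left inverse
      intro c
      by_cases h : ∃ v, Successor w v ∧ Quotient.mk aoSetoid v = c.1
      · apply Subtype.ext
        rw [hΨpos (Φ c) (hΦT1 c h), hΦpos c h]
      · apply Subtype.ext
        have h' := hΦT2 c h
        rw [hΨneg (Φ c) h']
        have he := t2e' (Φ c) h'
        rw [hΦneg c h] at he
        have haoe : AOEquiv (t2' (Φ c) h') (t2 c h) :=
          aoe_prepend_uu_cancel (quot_eq_iff.1 he)
        refine Eq.trans ?_ (t2e c h)
        exact Quotient.sound (aoe_append_uu (t2c' (Φ c) h') (t2c c h) haoe)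
    · -- right inverse
      intro c
      by_cases h : ∃ v, Successor w v ∧ Quotient.mk aoSetoid v = c.1
      · apply Subtype.ext
        rw [hΦpos (Ψ c) (hΨT1 c h), hΨpos c h]
      · apply Subtype.ext
        have h' := hΨT2 c h
        rw [hΦneg (Ψ c) h']
        have he := t2e (Ψ c) h'
        rw [hΨneg c h] at he
        have haoe : AOEquiv (t2 (Ψ c) h') (t2' c h) :=
          aoe_append_uu_cancel (quot_eq_iff.1 he)
        refine Eq.trans ?_ (t2e' c h)
        exact Quotient.sound (aoe_prepend_uu (t2c (Ψ c) h') (t2c' c h) haoe)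
    · -- adjacency
      intro a b
      show ClassAdj (Φ a).1 (Φ b).1 ↔ ClassAdj a.1 b.1
      by_cases ha : ∃ v, Successor w v ∧ Quotient.mk aoSetoid v = a.1 <;>
        by_cases hb : ∃ v, Successor w v ∧ Quotient.mk aoSetoid v = b.1
      · rw [hΦpos a ha, hΦpos b hb]
      · rw [hΦpos a ha, hΦneg b hb, ← t1e a ha, ← t2e b hb, classAdj_iff, classAdj_iff]
        constructor
        · intro hcontra
          exact absurd hcontra (no_edge_to_prepend hw hu hund hcop (t1s a ha) (t2s b hb)
            (t2c b hb))
        · intro hcontra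
          exact absurd hcontra (no_edge_to_append hu hund hcop (t1s a ha) (t2s b hb))
      · rw [hΦneg a ha, hΦpos b hb, ← t1e b hb, ← t2e a ha, classAdj_iff, classAdj_iff]
        rw [edge_prepend_drop_iff hw hu hund hcop (t2s a ha) (t1s b hb) (t2c a ha),
          edge_append_drop_iff hu hund hcop (t2s a ha) (t1s b hb) (t2c a ha)]
      · rw [hΦneg a ha, hΦneg b hb, ← t2e a ha, ← t2e b hb, classAdj_iff, classAdj_iff]
        rw [edge_prepend_uu_iff hw hu hund hcop (t2s a ha) (t2s b hb) (t2c a ha) (t2c b hb),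
          edge_append_uu_iff hu hund hcop (t2s a ha) (t2s b hb) (t2c a ha) (t2c b hb)]
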